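/- Let β ∈ ℝ³ be a unit vector of the form β = (c η₀, 0, η₀) for some c ∈ ℝ and η₀ ≠ 0 (β may or may not equal β_l), and set N(ζ) := √((σ − cη)² + γ²) for ζ = (σ, γ, η). Then there exist δ₀ > 0 and ε₀ > 0, depending only on β and β_l, with the following property. Let δ ∈ (0, δ₀], let A₂ ≥ A₁ > 0, and let Δ : Ξ → ℂ satisfy A₁ · N(ζ)/|ζ| ≤ |Δ(ζ)| ≤ A₂ · N(ζ)/|ζ| for all ζ ∈ Γ_δ(β), and A₁ ≤ |Δ(ζ)| ≤ A₂ for all ζ ∈ Ξ \ Γ_δ(β). Then there exist constants C₁, C₂ > 0, depending only on β, β_l, A₁, A₂ and δ (in particular independent of ζ, ε, the admissible sequence, and the index j), such that for every ε ∈ (0, ε₀], every ζ = (σ, γ, η) ∈ Ξ with γ > 0, and every admissible sequence (k_j): the set of indices j ∈ ℤ with X_{k_j} ∈ Γ_δ(β) and |Δ(X_{k_{j−1}})| > C₁ |r_j| · |Δ(X_{k_j})| contains at most one element; moreover, every j in this set satisfies |Δ(X_{k_{j−1}})| ≤ (C₂ |r_j| / (ε γ)) · |Δ(X_{k_j})|.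 -/

import Mathlib

noncomputable section

open scoped RealInnerProductSpace

/-- `ℝ³` with the Euclidean norm, coordinates `ζ = (σ, γ, η) = (ζ 0, ζ 1, ζ 2)`. -/
abbrev E3 : Type := EuclideanSpace ℝ (Fin 3)

/-- The frequency set `Ξ := {ζ ∈ ℝ³ : γ ≥ 0} \ {0}`. -/
def Xi : Set E3 := {ζ : E3 | 0 ≤ ζ 1 ∧ ζ ≠ 0}

/-- The cone `Γ_δ(β) := {ζ ∈ Ξ : |ζ/|ζ| − β| ≤ δ or |ζ/|ζ| + β| ≤ δ}`. -/
def cone (β : E3) (δ : ℝ) : Set E3 :=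
  {ζ : E3 | ζ ∈ Xi ∧ (‖‖ζ‖⁻¹ • ζ - β‖ ≤ δ ∨ ‖‖ζ‖⁻¹ • ζ + β‖ ≤ δ)}

/-- `X_k := ζ + (k/ε) β_l`. -/
def Xk (βl ζ : E3) (ε : ℝ) (k : ℤ) : E3 := ζ + (((k : ℝ)) / ε) • βl

/-- A bi-infinite integer sequence is admissible if it is strictly increasing or
strictly decreasing. -/
def Admissible (k : ℤ → ℤ) : Prop := StrictMono k ∨ StrictAnti k

private lemma st5_abs_le_sqrt (A B : ℝ) : |A| ≤ Real.sqrt (A^2 + B^2) := by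
  rw [← Real.sqrt_sq_eq_abs]
  exact Real.sqrt_le_sqrt (by nlinarith [sq_nonneg B])

private lemma st5_le_sqrt (A B : ℝ) (hB : 0 ≤ B) : B ≤ Real.sqrt (A^2 + B^2) := by
  calc B = |B| := (abs_of_nonneg hB).symm
    _ ≤ Real.sqrt (B^2 + A^2) := st5_abs_le_sqrt B A
    _ = _ := by rw [add_comm]

private lemma st5_le_of_sq (a b : ℝ) (ha : 0 ≤ a) (hb : 0 ≤ b) (h : a^2 ≤ b^2) : a ≤ b := by
  nlinarith [sq_nonneg (a - b), sq_nonneg (a + b)]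

private lemma st5_sqrt_shift (A B T : ℝ) :
    Real.sqrt ((A + T)^2 + B^2) ≤ Real.sqrt (A^2 + B^2) + |T| := by
  have h1 : |A| ≤ Real.sqrt (A^2+B^2) := st5_abs_le_sqrt A B
  have h3 : Real.sqrt (A^2+B^2) ^ 2 = A^2 + B^2 := Real.sq_sqrt (by positivity)
  have hAT : A*T ≤ |A| * |T| := by rw [← abs_mul]; exact le_abs_self _
  have h4 : (A+T)^2 + B^2 ≤ (Real.sqrt (A^2+B^2) + |T|)^2 := by
    nlinarith [mul_le_mul_of_nonneg_right h1 (abs_nonneg T), sq_abs T]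
  calc Real.sqrt ((A+T)^2+B^2) ≤ Real.sqrt ((Real.sqrt (A^2+B^2) + |T|)^2) := Real.sqrt_le_sqrt h4
    _ = _ := Real.sqrt_sq (by positivity)

private def Nf (c : ℝ) (x : E3) : ℝ := Real.sqrt ((x 0 - c * x 2)^2 + (x 1)^2)

private lemma st5_Nf_nonneg (c : ℝ) (x : E3) : 0 ≤ Nf c x := Real.sqrt_nonneg _

private lemma st5_coord1_le_Nf (c : ℝ) (x : E3) (h : 0 ≤ x 1) : x 1 ≤ Nf c x :=
  st5_le_sqrt _ _ h

private lemma st5_abs_le_Nf (c : ℝ) (x : E3) : |x 0 - c * x 2| ≤ Nf c x := st5_abs_le_sqrt _ _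

private lemma st5_coord_le_norm (x : E3) (i : Fin 3) : |x i| ≤ ‖x‖ := by
  rw [EuclideanSpace.norm_eq, ← Real.sqrt_sq_eq_abs]
  apply Real.sqrt_le_sqrt
  have := Finset.single_le_sum (f := fun j => ‖x j‖^2) (fun j _ => by positivity)
    (Finset.mem_univ i)
  simpa [Real.norm_eq_abs, sq_abs] using this

private lemma st5_norm_sq_expand (x : E3) : ‖x‖^2 = (x 0)^2 + (x 1)^2 + (x 2)^2 := by
  rw [EuclideanSpace.norm_eq, Real.sq_sqrt (by positivity)]
  simp [Fin.sum_univ_three, Real.norm_eq_abs, sq_abs]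

private lemma st5_Nf_le_L (c : ℝ) (x : E3) : Nf c x ≤ Real.sqrt (1 + c^2) * ‖x‖ := by
  rw [show Real.sqrt (1 + c^2) * ‖x‖ = Real.sqrt ((1+c^2) * ‖x‖^2) by
    rw [Real.sqrt_mul (by positivity), Real.sqrt_sq (norm_nonneg _)]]
  apply Real.sqrt_le_sqrt
  rw [st5_norm_sq_expand]
  nlinarith [sq_nonneg (c * x 0 + x 2), sq_nonneg (c * x 1)]

private lemma st5_Nf_eq_norm_sub (c η₀ : ℝ) (hη₀ : η₀ ≠ 0) (β : E3)
    (hβ0 : β 0 = c * η₀) (hβ1 : β 1 = 0) (hβ2 : β 2 = η₀) (x : E3) :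
    Nf c x = ‖x - (x 2 / η₀) • β‖ := by
  rw [EuclideanSpace.norm_eq]
  simp only [Fin.sum_univ_three, PiLp.sub_apply, PiLp.smul_apply, smul_eq_mul,
    Real.norm_eq_abs, sq_abs, hβ0, hβ1, hβ2]
  rw [Nf]
  congr 1
  field_simp
  ring

private lemma st5_Nf_lower_sq (c η₀ : ℝ) (hη₀ : η₀ ≠ 0) (β : E3)
    (hβ0 : β 0 = c * η₀) (hβ1 : β 1 = 0) (hβ2 : β 2 = η₀) (hβu : ‖β‖ = 1) (x : E3) :
    ‖x‖^2 - ⟪x, β⟫^2 ≤ Nf c x ^ 2 := by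
  rw [st5_Nf_eq_norm_sub c η₀ hη₀ β hβ0 hβ1 hβ2, norm_sub_sq_real, real_inner_smul_right,
    norm_smul, Real.norm_eq_abs, hβu, mul_one]
  nlinarith [sq_nonneg (x 2/η₀ - ⟪x, β⟫), sq_abs (x 2/η₀)]

set_option maxHeartbeats 1000000 in
theorem stmt_5 (βl : E3) (hβlu : ‖βl‖ = 1) (hβl1 : βl 1 = 0)
    (c η₀ : ℝ) (hη₀ : η₀ ≠ 0)
    (β : E3) (hβ0 : β 0 = c * η₀) (hβ1 : β 1 = 0) (hβ2 : β 2 = η₀) (hβu : ‖β‖ = 1) :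
    ∃ δ₀ > (0 : ℝ), ∃ ε₀ > (0 : ℝ),
      ∀ δ : ℝ, 0 < δ → δ ≤ δ₀ →
      ∀ A₁ A₂ : ℝ, 0 < A₁ → A₁ ≤ A₂ →
      ∃ C₁ > (0 : ℝ), ∃ C₂ > (0 : ℝ),
        ∀ Δ : E3 → ℂ,
          (∀ ζ ∈ cone β δ,
              A₁ * (Real.sqrt ((ζ 0 - c * ζ 2) ^ 2 + (ζ 1) ^ 2) / ‖ζ‖) ≤ ‖Δ ζ‖ ∧
              ‖Δ ζ‖ ≤ A₂ * (Real.sqrt ((ζ 0 - c * ζ 2) ^ 2 + (ζ 1) ^ 2) / ‖ζ‖)) →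
          (∀ ζ ∈ Xi \ cone β δ, A₁ ≤ ‖Δ ζ‖ ∧ ‖Δ ζ‖ ≤ A₂) →
          ∀ ε : ℝ, 0 < ε → ε ≤ ε₀ →
          ∀ ζ : E3, ζ ∈ Xi → 0 < ζ 1 →
          ∀ k : ℤ → ℤ, Admissible k →
            Set.Subsingleton {j : ℤ |
                Xk βl ζ ε (k j) ∈ cone β δ ∧
                C₁ * ((|k j - k (j - 1)| : ℤ) : ℝ) * ‖Δ (Xk βl ζ ε (k j))‖ <
                  ‖Δ (Xk βl ζ ε (k (j - 1)))‖} ∧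
            ∀ j ∈ {j : ℤ |
                Xk βl ζ ε (k j) ∈ cone β δ ∧
                C₁ * ((|k j - k (j - 1)| : ℤ) : ℝ) * ‖Δ (Xk βl ζ ε (k j))‖ <
                  ‖Δ (Xk βl ζ ε (k (j - 1)))‖},
              ‖Δ (Xk βl ζ ε (k (j - 1)))‖ ≤
                (C₂ * ((|k j - k (j - 1)| : ℤ) : ℝ) / (ε * ζ 1)) *
                  ‖Δ (Xk βl ζ ε (k j))‖ := by
  classical
  have hLpos : (0:ℝ) < Real.sqrt (1 + c^2) := Real.sqrt_pos.mpr (by positivity)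
  have hL1 : (1:ℝ) ≤ Real.sqrt (1 + c^2) := by
    calc (1:ℝ) = Real.sqrt 1 := Real.sqrt_one.symm
      _ ≤ _ := Real.sqrt_le_sqrt (by nlinarith [sq_nonneg c])
  set b : ℝ := βl 0 - c * βl 2 with hbdef
  set θ : ℝ := min ‖β - βl‖ ‖β + βl‖ with hθdef
  have hθnn : 0 ≤ θ := le_min (norm_nonneg _) (norm_nonneg _)
  have hθ2 : θ ≤ 2 := by
    refine le_trans (min_le_left _ _) ?_
    calc ‖β - βl‖ ≤ ‖β‖ + ‖βl‖ := norm_sub_le _ _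
      _ = 2 := by rw [hβu, hβlu]; norm_num
  set μ : ℝ := 1 - θ^2/8 with hμdef
  have hμhalf : 1/2 ≤ μ := by rw [hμdef]; nlinarith
  have hbθ : b ≠ 0 → 0 < θ := by
    intro hb
    have h1 : β ≠ βl := by
      intro h
      apply hb
      rw [hbdef, ← h, hβ0, hβ2]; ring
    have h2 : β + βl ≠ 0 := by
      intro h
      apply hb
      have hβl : βl = -β := by
        have := eq_neg_of_add_eq_zero_right h
        exact this
      have e0 : βl 0 = -(β 0) := by rw [hβl]; rfl
      have e2 : βl 2 = -(β 2) := by rw [hβl]; rfl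
      rw [hbdef, e0, e2, hβ0, hβ2]; ring
    exact lt_min (norm_sub_pos_iff.mpr h1) (norm_pos_iff.mpr h2)
  have hsubpos : b ≠ 0 → 0 < 1 - μ^2 := by
    intro hb
    have h1 := hbθ hb
    have ht : 0 < θ^2 := by positivity
    have h4 : θ^2 ≤ 4 := by nlinarith
    rw [hμdef]
    nlinarith [mul_pos ht (show (0:ℝ) < 16 - θ^2 by linarith)]
  set K : ℝ := if b = 0 then 1 else (Real.sqrt (1 - μ^2))⁻¹ with hKdef
  have hK1 : 1 ≤ K := by
    rw [hKdef]
    split_ifs with h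
    · exact le_refl _
    · have h1 := hsubpos h
      have h2 : 0 < Real.sqrt (1 - μ^2) := Real.sqrt_pos.mpr h1
      have hle : Real.sqrt (1 - μ^2) ≤ 1 := by
        calc Real.sqrt (1 - μ^2) ≤ Real.sqrt 1 := Real.sqrt_le_sqrt (by nlinarith)
          _ = 1 := Real.sqrt_one
      have h3 : 0 < (Real.sqrt (1 - μ^2))⁻¹ := inv_pos.mpr h2
      nlinarith [mul_inv_cancel₀ h2.ne']
  have hKpos : (0:ℝ) < K := lt_of_lt_of_le one_pos hK1
  have hKsqrt : b ≠ 0 → K * Real.sqrt (1 - μ^2) = 1 := by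
    intro h
    rw [hKdef, if_neg h]
    exact inv_mul_cancel₀ (Real.sqrt_pos.mpr (hsubpos h)).ne'
  refine ⟨min 1 (if b = 0 then 1 else θ/2), ?_, 1, one_pos, ?_⟩
  · apply lt_min one_pos
    split_ifs with h
    · exact one_pos
    · have := hbθ h; linarith
  intro δ hδpos hδ0 A₁ A₂ hA₁ hA₁₂
  have hδ1 : δ ≤ 1 := hδ0.trans (min_le_left _ _)
  have hδθ : b ≠ 0 → δ ≤ θ/2 := by
    intro h
    have h2 := hδ0.trans (min_le_right _ _)
    rwa [if_neg h] at h2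
  have hA₂ : 0 < A₂ := hA₁.trans_le hA₁₂
  set c₁ : ℝ := A₁ / Real.sqrt (1 + c^2) with hc₁def
  set c₂ : ℝ := Real.sqrt 2 * A₂ / δ with hc₂def
  have hc₁pos : 0 < c₁ := div_pos hA₁ hLpos
  have hc₂pos : 0 < c₂ := div_pos (mul_pos (Real.sqrt_pos.mpr two_pos) hA₂) hδpos
  have h12 : (1:ℝ) ≤ Real.sqrt 2 := by
    calc (1:ℝ) = Real.sqrt 1 := Real.sqrt_one.symm
      _ ≤ _ := Real.sqrt_le_sqrt (by norm_num)
  have hA₂c₂ : A₂ ≤ c₂ := by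
    rw [hc₂def, le_div_iff₀ hδpos]
    nlinarith
  have hc₁A₁ : c₁ ≤ A₁ := by
    rw [hc₁def]
    exact div_le_self hA₁.le hL1
  refine ⟨4*K*c₂/c₁, by positivity, 2*K*(1+|b|)*c₂/c₁, by positivity, ?_⟩
  intro Δ hconeB houtB ε hε hεle ζ hζXi hγ k hadm
  have hεne : ε ≠ 0 := hε.ne'
  have hγ0 : 0 ≤ ζ 1 := hγ.le
  have hkinj : Function.Injective k := hadm.elim (fun h => h.injective) (fun h => h.injective)
  have hXc : ∀ (m : ℤ) (i : Fin 3), Xk βl ζ ε m i = ζ i + ((m:ℝ)/ε) * βl i := by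
    intro m i
    simp [Xk]
  have hX1 : ∀ m : ℤ, Xk βl ζ ε m 1 = ζ 1 := by
    intro m
    rw [hXc, hβl1, mul_zero, add_zero]
  have hXne : ∀ m : ℤ, Xk βl ζ ε m ≠ 0 := by
    intro m h
    have h1 := hX1 m
    rw [h] at h1
    simp only [PiLp.zero_apply] at h1
    exact hγ.ne' h1.symm
  have hXXi : ∀ m : ℤ, Xk βl ζ ε m ∈ Xi := fun m => ⟨by rw [hX1]; exact hγ0, hXne m⟩
  have hXpos : ∀ m : ℤ, 0 < ‖Xk βl ζ ε m‖ := fun m => norm_pos_iff.mpr (hXne m)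
  have hγnorm : ∀ m : ℤ, ζ 1 ≤ ‖Xk βl ζ ε m‖ := by
    intro m
    calc ζ 1 = Xk βl ζ ε m 1 := (hX1 m).symm
      _ ≤ |Xk βl ζ ε m 1| := le_abs_self _
      _ ≤ ‖Xk βl ζ ε m‖ := st5_coord_le_norm _ _
  have hγN : ∀ m : ℤ, ζ 1 ≤ Nf c (Xk βl ζ ε m) := by
    intro m
    calc ζ 1 = Xk βl ζ ε m 1 := (hX1 m).symm
      _ ≤ _ := st5_coord1_le_Nf c _ (by rw [hX1]; exact hγ0)
  have hNpos : ∀ m : ℤ, 0 < Nf c (Xk βl ζ ε m) := fun m => hγ.trans_le (hγN m)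
  have hF : ∀ m : ℤ, Xk βl ζ ε m 0 - c * Xk βl ζ ε m 2
      = (ζ 0 - c * ζ 2) + ((m:ℝ)/ε) * b := by
    intro m
    rw [hXc, hXc, hbdef]
    ring
  have hNshift : ∀ m m' : ℤ, Nf c (Xk βl ζ ε m')
      ≤ Nf c (Xk βl ζ ε m) + |b| * (((|m' - m| : ℤ):ℝ)/ε) := by
    intro m m'
    have e1 : Xk βl ζ ε m' 0 - c * Xk βl ζ ε m' 2
        = (Xk βl ζ ε m 0 - c * Xk βl ζ ε m 2) + (((m' - m : ℤ):ℝ)/ε) * b := by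
      rw [hF, hF]
      push_cast
      ring
    have e2 : Nf c (Xk βl ζ ε m')
        = Real.sqrt (((Xk βl ζ ε m 0 - c * Xk βl ζ ε m 2) + (((m' - m : ℤ):ℝ)/ε) * b)^2
          + (ζ 1)^2) := by
      simp only [Nf]
      rw [e1, hX1]
    have e3 : Nf c (Xk βl ζ ε m)
        = Real.sqrt ((Xk βl ζ ε m 0 - c * Xk βl ζ ε m 2)^2 + (ζ 1)^2) := by
      simp only [Nf]
      rw [hX1]
    rw [e2, e3]
    refine le_trans (st5_sqrt_shift _ _ _) (le_of_eq ?_)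
    rw [abs_mul, abs_div, abs_of_pos hε, Int.cast_abs]
    ring
  have hXsub : ∀ m m' : ℤ, Xk βl ζ ε m' - Xk βl ζ ε m = (((m' - m : ℤ):ℝ)/ε) • βl := by
    intro m m'
    simp only [Xk]
    rw [show ((m' - m : ℤ):ℝ)/ε = ((m':ℤ):ℝ)/ε - ((m:ℤ):ℝ)/ε by push_cast; ring, sub_smul]
    abel
  have hXdist : ∀ m m' : ℤ, ‖Xk βl ζ ε m' - Xk βl ζ ε m‖ = ((|m' - m| : ℤ):ℝ)/ε := by
    intro m m'
    rw [hXsub, norm_smul, hβlu, mul_one, Real.norm_eq_abs, abs_div, abs_of_pos hε, Int.cast_abs]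
  have hXtri : ∀ m m' : ℤ, ‖Xk βl ζ ε m'‖ ≤ ‖Xk βl ζ ε m‖ + ((|m' - m| : ℤ):ℝ)/ε := by
    intro m m'
    calc ‖Xk βl ζ ε m'‖ = ‖Xk βl ζ ε m + (Xk βl ζ ε m' - Xk βl ζ ε m)‖ := by congr 1; abel
      _ ≤ ‖Xk βl ζ ε m‖ + ‖Xk βl ζ ε m' - Xk βl ζ ε m‖ := norm_add_le _ _
      _ = _ := by rw [hXdist]
  have tr_low : ∀ m : ℤ, c₁ * Nf c (Xk βl ζ ε m)
      ≤ ‖Δ (Xk βl ζ ε m)‖ * ‖Xk βl ζ ε m‖ := by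
    intro m
    by_cases hcm : Xk βl ζ ε m ∈ cone β δ
    · have h1 := (hconeB _ hcm).1
      have h2 := mul_le_mul_of_nonneg_right h1 (norm_nonneg (Xk βl ζ ε m))
      rw [mul_assoc, div_mul_cancel₀ _ (hXpos m).ne'] at h2
      refine le_trans ?_ h2
      exact mul_le_mul_of_nonneg_right hc₁A₁ (st5_Nf_nonneg _ _)
    · have h1 := (houtB _ ⟨hXXi m, hcm⟩).1
      calc c₁ * Nf c (Xk βl ζ ε m) ≤ c₁ * (Real.sqrt (1 + c^2) * ‖Xk βl ζ ε m‖) :=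
            mul_le_mul_of_nonneg_left (st5_Nf_le_L c _) hc₁pos.le
        _ = A₁ * ‖Xk βl ζ ε m‖ := by rw [hc₁def]; field_simp
        _ ≤ _ := mul_le_mul_of_nonneg_right h1 (norm_nonneg _)
  have tr_up : ∀ m : ℤ, ‖Δ (Xk βl ζ ε m)‖ * ‖Xk βl ζ ε m‖
      ≤ c₂ * Nf c (Xk βl ζ ε m) := by
    intro m
    by_cases hcm : Xk βl ζ ε m ∈ cone β δ
    · have h1 := (hconeB _ hcm).2
      have h2 := mul_le_mul_of_nonneg_right h1 (norm_nonneg (Xk βl ζ ε m))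
      rw [mul_assoc, div_mul_cancel₀ _ (hXpos m).ne'] at h2
      refine le_trans h2 ?_
      exact mul_le_mul_of_nonneg_right hA₂c₂ (st5_Nf_nonneg _ _)
    · set x := Xk βl ζ ε m with hxdef
      have h1 := (houtB _ ⟨hXXi m, hcm⟩).2
      have hor : ¬(‖‖x‖⁻¹ • x - β‖ ≤ δ ∨ ‖‖x‖⁻¹ • x + β‖ ≤ δ) := fun h => hcm ⟨hXXi m, h⟩
      push_neg at hor
      have hu : ‖‖x‖⁻¹ • x‖ = 1 := norm_smul_inv_norm (hXne m)
      have e1 : ‖‖x‖⁻¹ • x - β‖^2 = 2 - 2*⟪‖x‖⁻¹ • x, β⟫ := by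
        rw [norm_sub_sq_real, hu, hβu]; ring
      have e2 : ‖‖x‖⁻¹ • x + β‖^2 = 2 + 2*⟪‖x‖⁻¹ • x, β⟫ := by
        rw [norm_add_sq_real, hu, hβu]; ring
      have q1 : δ^2 ≤ 2 - 2*⟪‖x‖⁻¹ • x, β⟫ := by
        rw [← e1]; exact pow_le_pow_left₀ hδpos.le hor.1.le 2
      have q2 : δ^2 ≤ 2 + 2*⟪‖x‖⁻¹ • x, β⟫ := by
        rw [← e2]; exact pow_le_pow_left₀ hδpos.le hor.2.le 2
      have habs : |⟪‖x‖⁻¹ • x, β⟫| ≤ 1 - δ^2/2 :=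
        abs_le.mpr ⟨by linarith only [q2], by linarith only [q1]⟩
      have hxi : ⟪x, β⟫ = ‖x‖ * ⟪‖x‖⁻¹ • x, β⟫ := by
        rw [real_inner_smul_left, ← mul_assoc, mul_inv_cancel₀ (hXpos m).ne', one_mul]
      have hinn2 : ⟪x, β⟫^2 ≤ (1 - δ^2/2) * ‖x‖^2 := by
        have ht1 : (0:ℝ) ≤ 1 - δ^2/2 := by
          have hδδ : δ*δ ≤ 1*1 := mul_le_mul hδ1 hδ1 hδpos.le zero_le_one
          linarith only [hδδ]
        have h3 : |⟪‖x‖⁻¹ • x, β⟫|^2 ≤ (1-δ^2/2)^2 :=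
          pow_le_pow_left₀ (abs_nonneg _) habs 2
        rw [sq_abs] at h3
        rw [hxi, mul_pow]
        have hq2q : (1-δ^2/2)^2 ≤ 1-δ^2/2 := by
          have h4 := mul_nonneg ht1 (show (0:ℝ) ≤ δ^2/2 by positivity)
          linarith only [h4]
        have ht2 : ⟪‖x‖⁻¹ • x, β⟫^2 ≤ 1-δ^2/2 := le_trans h3 hq2q
        have h5 := mul_le_mul_of_nonneg_left ht2 (sq_nonneg ‖x‖)
        linarith only [h5]
      have hNf2 := st5_Nf_lower_sq c η₀ hη₀ β hβ0 hβ1 hβ2 hβu x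
      have hkey : δ * ‖x‖ ≤ Real.sqrt 2 * Nf c x := by
        apply st5_le_of_sq _ _ (mul_nonneg hδpos.le (norm_nonneg _))
          (mul_nonneg (Real.sqrt_nonneg _) (st5_Nf_nonneg _ _))
        rw [mul_pow, mul_pow, Real.sq_sqrt (by norm_num : (0:ℝ) ≤ 2)]
        linarith only [hNf2, hinn2]
      calc ‖Δ x‖ * ‖x‖ ≤ A₂ * ‖x‖ := mul_le_mul_of_nonneg_right h1 (norm_nonneg _)
        _ ≤ c₂ * Nf c x := by
            rw [hc₂def, div_mul_eq_mul_div, le_div_iff₀ hδpos]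
            calc A₂ * ‖x‖ * δ = A₂ * (δ * ‖x‖) := by ring
              _ ≤ A₂ * (Real.sqrt 2 * Nf c x) := mul_le_mul_of_nonneg_left hkey hA₂.le
              _ = Real.sqrt 2 * A₂ * Nf c x := by ring
  have hcone_inner : ∀ x : E3, x ∈ cone β δ → b ≠ 0 → |⟪x, βl⟫| ≤ μ * ‖x‖ := by
    intro x hx hbz
    obtain ⟨⟨_, hxne⟩, hor⟩ := hx
    have hθpos := hbθ hbz
    have hδθ' := hδθ hbz
    have hu : ‖‖x‖⁻¹ • x‖ = 1 := norm_smul_inv_norm hxne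
    have hθle1 : θ ≤ ‖β - βl‖ := min_le_left _ _
    have hθle2 : θ ≤ ‖β + βl‖ := min_le_right _ _
    have hkey : θ/2 ≤ ‖‖x‖⁻¹ • x - βl‖ ∧ θ/2 ≤ ‖‖x‖⁻¹ • x + βl‖ := by
      rcases hor with h | h
      · constructor
        · have h1 : ‖β - βl‖ ≤ ‖β - ‖x‖⁻¹ • x‖ + ‖‖x‖⁻¹ • x - βl‖ := by
            calc ‖β - βl‖ = ‖(β - ‖x‖⁻¹ • x) + (‖x‖⁻¹ • x - βl)‖ := by rw [sub_add_sub_cancel]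
              _ ≤ _ := norm_add_le _ _
          have h2 : ‖β - ‖x‖⁻¹ • x‖ ≤ δ := by rw [norm_sub_rev]; exact h
          linarith only [h1, h2, hθle1, hδθ']
        · have h1 : ‖β + βl‖ ≤ ‖β - ‖x‖⁻¹ • x‖ + ‖‖x‖⁻¹ • x + βl‖ := by
            calc ‖β + βl‖ = ‖(β - ‖x‖⁻¹ • x) + (‖x‖⁻¹ • x + βl)‖ := by congr 1; abel
              _ ≤ _ := norm_add_le _ _
          have h2 : ‖β - ‖x‖⁻¹ • x‖ ≤ δ := by rw [norm_sub_rev]; exact h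
          linarith only [h1, h2, hθle2, hδθ']
      · constructor
        · have h1 : ‖β + βl‖ ≤ ‖‖x‖⁻¹ • x + β‖ + ‖‖x‖⁻¹ • x - βl‖ := by
            calc ‖β + βl‖ = ‖(‖x‖⁻¹ • x + β) - (‖x‖⁻¹ • x - βl)‖ := by
                  rw [show (‖x‖⁻¹ • x + β) - (‖x‖⁻¹ • x - βl) = β + βl from by abel]
              _ ≤ _ := norm_sub_le _ _
          linarith only [h1, h, hθle2, hδθ']
        · have h1 : ‖β - βl‖ ≤ ‖‖x‖⁻¹ • x + β‖ + ‖‖x‖⁻¹ • x + βl‖ := by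
            calc ‖β - βl‖ = ‖(‖x‖⁻¹ • x + β) - (‖x‖⁻¹ • x + βl)‖ := by
                  rw [show (‖x‖⁻¹ • x + β) - (‖x‖⁻¹ • x + βl) = β - βl from by abel]
              _ ≤ _ := norm_sub_le _ _
          linarith only [h1, h, hθle1, hδθ']
    obtain ⟨hm1, hp1⟩ := hkey
    have e1 : ‖‖x‖⁻¹ • x - βl‖^2 = 2 - 2*⟪‖x‖⁻¹ • x, βl⟫ := by
      rw [norm_sub_sq_real, hu, hβlu]; ring
    have e2 : ‖‖x‖⁻¹ • x + βl‖^2 = 2 + 2*⟪‖x‖⁻¹ • x, βl⟫ := by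
      rw [norm_add_sq_real, hu, hβlu]; ring
    have q1 : (θ/2)^2 ≤ 2 - 2*⟪‖x‖⁻¹ • x, βl⟫ := by
      rw [← e1]; exact pow_le_pow_left₀ (by linarith) hm1 2
    have q2 : (θ/2)^2 ≤ 2 + 2*⟪‖x‖⁻¹ • x, βl⟫ := by
      rw [← e2]; exact pow_le_pow_left₀ (by linarith) hp1 2
    have habs : |⟪‖x‖⁻¹ • x, βl⟫| ≤ μ := by
      rw [hμdef, abs_le]
      constructor
      · linarith only [q2]
      · linarith only [q1]
    have hxi : ⟪x, βl⟫ = ‖x‖ * ⟪‖x‖⁻¹ • x, βl⟫ := by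
      have hnx : ‖x‖ ≠ 0 := norm_ne_zero_iff.mpr hxne
      rw [real_inner_smul_left, ← mul_assoc, mul_inv_cancel₀ hnx, one_mul]
    rw [hxi, abs_mul, abs_of_nonneg (norm_nonneg x), mul_comm μ ‖x‖]
    exact mul_le_mul_of_nonneg_left habs (norm_nonneg x)
  have main : ∀ j : ℤ, Xk βl ζ ε (k j) ∈ cone β δ →
      4*K*c₂/c₁ * ((|k j - k (j - 1)| : ℤ) : ℝ) * ‖Δ (Xk βl ζ ε (k j))‖ <
        ‖Δ (Xk βl ζ ε (k (j - 1)))‖ →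
      ((b = 0 → ‖Xk βl ζ ε (k (j - 1))‖ < 1/(3*ε)) ∧
       (b ≠ 0 → |ε*(ζ 0 - c*ζ 2) + ((k j : ℤ):ℝ)*b| < |b|/2) ∧
       ‖Δ (Xk βl ζ ε (k (j - 1)))‖ ≤
         (2*K*(1+|b|)*c₂/c₁ * ((|k j - k (j - 1)| : ℤ) : ℝ) / (ε * ζ 1)) *
           ‖Δ (Xk βl ζ ε (k j))‖) := by
    intro j hjcone hjbad
    set m : ℤ := k (j - 1) with hm
    set m' : ℤ := k j with hm'
    set R : ℝ := ((|m' - m| : ℤ) : ℝ) with hR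
    have hmne : m ≠ m' := by
      intro h
      have := hkinj h
      omega
    have hR1 : (1:ℝ) ≤ R := by
      rw [hR]
      have h1 : (1:ℤ) ≤ |m' - m| := Int.one_le_abs (sub_ne_zero.mpr (Ne.symm hmne))
      exact_mod_cast h1
    have hRpos : (0:ℝ) < R := lt_of_lt_of_le one_pos hR1
    have hnZ := hNpos m'
    have hnY := hNpos m
    have hwY := hXpos m
    have hwZ := hXpos m'
    have habs0 : (0:ℝ) ≤ |b| := abs_nonneg b
    have hKc : (0:ℝ) < 2*K*(1+|b|)*c₂/c₁ :=
      div_pos (mul_pos (mul_pos (mul_pos two_pos hKpos) (by positivity)) hc₂pos) hc₁pos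
    have hq0 : (0:ℝ) ≤ 2*K*(1+|b|)*c₂/c₁*R := (mul_pos hKc hRpos).le
    have hεγ : (0:ℝ) < ε * ζ 1 := mul_pos hε hγ
    have hεγW : (0:ℝ) ≤ ε * ζ 1 * ‖Xk βl ζ ε m'‖ := (mul_pos hεγ hwZ).le
    have badh : 4*K*R * Nf c (Xk βl ζ ε m') * ‖Xk βl ζ ε m‖
        < Nf c (Xk βl ζ ε m) * ‖Xk βl ζ ε m'‖ := by
      have h3 := mul_lt_mul_of_pos_right hjbad (mul_pos hwZ hwY)
      have hC0 : (0:ℝ) ≤ 4*K*c₂/c₁*R :=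
        (mul_pos (div_pos (mul_pos (mul_pos (by norm_num) hKpos) hc₂pos) hc₁pos) hRpos).le
      have h4 : 4*K*c₂*R*Nf c (Xk βl ζ ε m') * ‖Xk βl ζ ε m‖
          ≤ 4*K*c₂/c₁ * R * ‖Δ (Xk βl ζ ε m')‖ * (‖Xk βl ζ ε m'‖*‖Xk βl ζ ε m‖) := by
        have h5 := mul_le_mul_of_nonneg_left (tr_low m') hC0
        calc 4*K*c₂*R*Nf c (Xk βl ζ ε m')*‖Xk βl ζ ε m‖
            = (4*K*c₂/c₁*R*(c₁*Nf c (Xk βl ζ ε m')))*‖Xk βl ζ ε m‖ := by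
              field_simp
          _ ≤ (4*K*c₂/c₁*R*(‖Δ (Xk βl ζ ε m')‖*‖Xk βl ζ ε m'‖))*‖Xk βl ζ ε m‖ :=
              mul_le_mul_of_nonneg_right h5 (norm_nonneg _)
          _ = _ := by ring
      have h6 : ‖Δ (Xk βl ζ ε m)‖ * (‖Xk βl ζ ε m'‖*‖Xk βl ζ ε m‖)
          ≤ c₂ * Nf c (Xk βl ζ ε m) * ‖Xk βl ζ ε m'‖ := by
        calc ‖Δ (Xk βl ζ ε m)‖ * (‖Xk βl ζ ε m'‖*‖Xk βl ζ ε m‖)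
            = (‖Δ (Xk βl ζ ε m)‖*‖Xk βl ζ ε m‖)*‖Xk βl ζ ε m'‖ := by ring
          _ ≤ (c₂*Nf c (Xk βl ζ ε m))*‖Xk βl ζ ε m'‖ :=
              mul_le_mul_of_nonneg_right (tr_up m) (norm_nonneg _)
          _ = _ := by ring
      have h7 := lt_of_le_of_lt h4 (lt_of_lt_of_le h3 h6)
      have h8 : c₂ * (4*K*R*Nf c (Xk βl ζ ε m')*‖Xk βl ζ ε m‖)
          < c₂ * (Nf c (Xk βl ζ ε m)*‖Xk βl ζ ε m'‖) := by
        calc c₂ * (4*K*R*Nf c (Xk βl ζ ε m')*‖Xk βl ζ ε m‖)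
            = 4*K*c₂*R*Nf c (Xk βl ζ ε m')*‖Xk βl ζ ε m‖ := by ring
          _ < c₂ * Nf c (Xk βl ζ ε m) * ‖Xk βl ζ ε m'‖ := h7
          _ = _ := by ring
      exact lt_of_mul_lt_mul_left h8 hc₂pos.le
    have hNYshift : Nf c (Xk βl ζ ε m) ≤ Nf c (Xk βl ζ ε m') + |b| * (R/ε) := by
      have h1 := hNshift m' m
      rwa [abs_sub_comm m m', ← hR] at h1
    have hWZtri : ‖Xk βl ζ ε m'‖ ≤ ‖Xk βl ζ ε m‖ + R/ε := by
      have h1 := hXtri m m'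
      rwa [← hR] at h1
    by_cases hbz : b = 0
    · -- parallel case
      have hK0 : K = 1 := by rw [hKdef, if_pos hbz]
      have hNeq : Nf c (Xk βl ζ ε m) = Nf c (Xk βl ζ ε m') := by
        simp only [Nf]
        rw [hF, hF, hbz, hX1, hX1]
        ring_nf
      have hYsmall : ‖Xk βl ζ ε m‖ < 1/(3*ε) := by
        have h9 : 4*R*(Nf c (Xk βl ζ ε m'))*‖Xk βl ζ ε m‖
            < Nf c (Xk βl ζ ε m') * (‖Xk βl ζ ε m‖ + R/ε) := by
          calc 4*R*(Nf c (Xk βl ζ ε m'))*‖Xk βl ζ ε m‖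
              = 4*K*R*Nf c (Xk βl ζ ε m')*‖Xk βl ζ ε m‖ := by rw [hK0]; ring
            _ < Nf c (Xk βl ζ ε m) * ‖Xk βl ζ ε m'‖ := badh
            _ = Nf c (Xk βl ζ ε m') * ‖Xk βl ζ ε m'‖ := by rw [hNeq]
            _ ≤ Nf c (Xk βl ζ ε m') * (‖Xk βl ζ ε m‖ + R/ε) :=
                mul_le_mul_of_nonneg_left hWZtri hnZ.le
        have h10 : 4*R*‖Xk βl ζ ε m‖ < ‖Xk βl ζ ε m‖ + R/ε := by
          have h11 : Nf c (Xk βl ζ ε m') * (4*R*‖Xk βl ζ ε m‖)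
              < Nf c (Xk βl ζ ε m') * (‖Xk βl ζ ε m‖ + R/ε) := by
            calc Nf c (Xk βl ζ ε m') * (4*R*‖Xk βl ζ ε m‖)
                = 4*R*(Nf c (Xk βl ζ ε m'))*‖Xk βl ζ ε m‖ := by ring
              _ < _ := h9
          exact lt_of_mul_lt_mul_left h11 hnZ.le
        rw [lt_div_iff₀ (by positivity : (0:ℝ) < 3*ε)]
        by_contra hcon
        push_neg at hcon
        have h12 : R * 1 ≤ R * (‖Xk βl ζ ε m‖*(3*ε)) :=
          mul_le_mul_of_nonneg_left hcon hRpos.le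
        have h13 := mul_lt_mul_of_pos_right h10 hε
        rw [add_mul, div_mul_cancel₀ _ hεne] at h13
        linarith only [h12, h13, mul_nonneg (sub_nonneg.mpr hR1)
          (mul_nonneg (norm_nonneg (Xk βl ζ ε m)) hε.le)]
      refine ⟨fun _ => hYsmall, fun hbnz => absurd hbz hbnz, ?_⟩
      rw [show 2*K*(1+|b|)*c₂/c₁ * R / (ε * ζ 1) * ‖Δ (Xk βl ζ ε m')‖
          = (2*K*(1+|b|)*c₂/c₁ * R * ‖Δ (Xk βl ζ ε m')‖) / (ε * ζ 1) from by ring,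
        le_div_iff₀ hεγ]
      refine le_of_mul_le_mul_right ?_ (mul_pos hwY hwZ)
      have hYR : ‖Xk βl ζ ε m‖ ≤ R/(3*ε) := by
        refine le_trans hYsmall.le ?_
        rw [div_le_div_iff₀ (by positivity) (by positivity)]
        have h1 := mul_le_mul_of_nonneg_right hR1 (by positivity : (0:ℝ) ≤ 3*ε)
        linarith only [h1]
      have hchainL : ‖Δ (Xk βl ζ ε m)‖ * (ε * ζ 1) * (‖Xk βl ζ ε m‖*‖Xk βl ζ ε m'‖)
          ≤ (4/3) * c₂ * Nf c (Xk βl ζ ε m') * ζ 1 * R := by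
        calc ‖Δ (Xk βl ζ ε m)‖ * (ε * ζ 1) * (‖Xk βl ζ ε m‖*‖Xk βl ζ ε m'‖)
            = (‖Δ (Xk βl ζ ε m)‖ * ‖Xk βl ζ ε m‖) * (ε * ζ 1 * ‖Xk βl ζ ε m'‖) := by
              ring
          _ ≤ (c₂ * Nf c (Xk βl ζ ε m)) * (ε * ζ 1 * ‖Xk βl ζ ε m'‖) :=
              mul_le_mul_of_nonneg_right (tr_up m) hεγW
          _ = (c₂ * Nf c (Xk βl ζ ε m')) * (ε * ζ 1 * ‖Xk βl ζ ε m'‖) := by rw [hNeq]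
          _ ≤ (c₂ * Nf c (Xk βl ζ ε m')) * (ε * ζ 1 * (‖Xk βl ζ ε m‖ + R/ε)) := by
              refine mul_le_mul_of_nonneg_left ?_ (mul_nonneg hc₂pos.le (st5_Nf_nonneg _ _))
              exact mul_le_mul_of_nonneg_left hWZtri hεγ.le
          _ ≤ (c₂ * Nf c (Xk βl ζ ε m')) * (ε * ζ 1 * (R/(3*ε) + R/ε)) := by
              refine mul_le_mul_of_nonneg_left ?_ (mul_nonneg hc₂pos.le (st5_Nf_nonneg _ _))
              refine mul_le_mul_of_nonneg_left ?_ hεγ.le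
              linarith only [hYR]
          _ = (4/3) * c₂ * Nf c (Xk βl ζ ε m') * ζ 1 * R := by
              field_simp
              ring
      have hchainR : 2*K*(1+|b|)*c₂ * Nf c (Xk βl ζ ε m') * ζ 1 * R
          ≤ 2*K*(1+|b|)*c₂/c₁ * R * ‖Δ (Xk βl ζ ε m')‖
            * (‖Xk βl ζ ε m‖*‖Xk βl ζ ε m'‖) := by
        calc 2*K*(1+|b|)*c₂ * Nf c (Xk βl ζ ε m') * ζ 1 * R
            = (2*K*(1+|b|)*c₂/c₁*R) * ((c₁ * Nf c (Xk βl ζ ε m')) * ζ 1) := by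
              field_simp
          _ ≤ (2*K*(1+|b|)*c₂/c₁*R) * ((‖Δ (Xk βl ζ ε m')‖ * ‖Xk βl ζ ε m'‖) * ζ 1) :=
              mul_le_mul_of_nonneg_left (mul_le_mul_of_nonneg_right (tr_low m') hγ0) hq0
          _ ≤ (2*K*(1+|b|)*c₂/c₁*R) * ((‖Δ (Xk βl ζ ε m')‖ * ‖Xk βl ζ ε m'‖)
                * ‖Xk βl ζ ε m‖) := by
              refine mul_le_mul_of_nonneg_left (mul_le_mul_of_nonneg_left (hγnorm m) ?_) hq0
              exact mul_nonneg (norm_nonneg _) (norm_nonneg _)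
          _ = _ := by ring
      refine le_trans hchainL (le_trans ?_ hchainR)
      have h43 : (4:ℝ)/3 ≤ 2*K*(1+|b|) := by
        have hKb : (1:ℝ)*1 ≤ K*(1+|b|) :=
          mul_le_mul hK1 (by linarith only [habs0]) (by norm_num) hKpos.le
        linarith only [hKb]
      have hnn : (0:ℝ) ≤ c₂ * Nf c (Xk βl ζ ε m') * ζ 1 * R :=
        mul_nonneg (mul_nonneg (mul_nonneg hc₂pos.le (st5_Nf_nonneg _ _)) hγ0) hRpos.le
      calc (4/3) * c₂ * Nf c (Xk βl ζ ε m') * ζ 1 * R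
          = (c₂ * Nf c (Xk βl ζ ε m') * ζ 1 * R) * ((4:ℝ)/3) := by ring
        _ ≤ (c₂ * Nf c (Xk βl ζ ε m') * ζ 1 * R) * (2*K*(1+|b|)) :=
            mul_le_mul_of_nonneg_left h43 hnn
        _ = 2*K*(1+|b|)*c₂ * Nf c (Xk βl ζ ε m') * ζ 1 * R := by ring
    · -- non-parallel case
      have hIn : |⟪Xk βl ζ ε m', βl⟫| ≤ μ * ‖Xk βl ζ ε m'‖ := hcone_inner _ hjcone hbz
      have decompsq : ∀ x : E3, ‖x - ⟪x, βl⟫ • βl‖^2 = ‖x‖^2 - ⟪x, βl⟫^2 := by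
        intro x
        rw [norm_sub_sq_real, real_inner_smul_right, norm_smul, Real.norm_eq_abs, hβlu,
          mul_one, sq_abs]
        ring
      have hPerpEq : Xk βl ζ ε m' - ⟪Xk βl ζ ε m', βl⟫ • βl
          = Xk βl ζ ε m - ⟪Xk βl ζ ε m, βl⟫ • βl := by
        have hYZ : Xk βl ζ ε m = Xk βl ζ ε m' + (((m - m' : ℤ):ℝ)/ε) • βl := by
          rw [← hXsub m' m]
          abel
        rw [hYZ, inner_add_left, real_inner_smul_left, real_inner_self_eq_norm_sq, hβlu]
        rw [one_pow, mul_one, add_smul]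
        abel
      have hKY : ‖Xk βl ζ ε m'‖ ≤ K * ‖Xk βl ζ ε m‖ := by
        have d1 := decompsq (Xk βl ζ ε m')
        have d2 := decompsq (Xk βl ζ ε m)
        have hperp : ‖Xk βl ζ ε m' - ⟪Xk βl ζ ε m', βl⟫ • βl‖^2 ≤ ‖Xk βl ζ ε m‖^2 := by
          rw [hPerpEq, d2]
          linarith only [sq_nonneg ⟪Xk βl ζ ε m, βl⟫]
        have hinn2 : ⟪Xk βl ζ ε m', βl⟫^2 ≤ μ^2 * ‖Xk βl ζ ε m'‖^2 := by
          have h1 := mul_self_le_mul_self (abs_nonneg ⟪Xk βl ζ ε m', βl⟫) hIn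
          have h2 := sq_abs ⟪Xk βl ζ ε m', βl⟫
          linarith only [h1, h2]
        have hsq : (1 - μ^2) * ‖Xk βl ζ ε m'‖^2 ≤ ‖Xk βl ζ ε m‖^2 := by
          linarith only [d1, hperp, hinn2]
        have hs : Real.sqrt (1-μ^2) * ‖Xk βl ζ ε m'‖ ≤ ‖Xk βl ζ ε m‖ := by
          apply st5_le_of_sq _ _ (mul_nonneg (Real.sqrt_nonneg _) (norm_nonneg _)) (norm_nonneg _)
          rw [mul_pow, Real.sq_sqrt (hsubpos hbz).le]
          exact hsq
        calc ‖Xk βl ζ ε m'‖ = K * (Real.sqrt (1-μ^2) * ‖Xk βl ζ ε m'‖) := by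
              rw [← mul_assoc, hKsqrt hbz, one_mul]
          _ ≤ K * ‖Xk βl ζ ε m‖ := mul_le_mul_of_nonneg_left hs hKpos.le
      have hA' : 4*R*Nf c (Xk βl ζ ε m') < Nf c (Xk βl ζ ε m') + |b| * (R/ε) := by
        have h9 : 4*K*R*Nf c (Xk βl ζ ε m')*‖Xk βl ζ ε m‖
            < (Nf c (Xk βl ζ ε m') + |b| * (R/ε)) * (K * ‖Xk βl ζ ε m‖) := by
          refine lt_of_lt_of_le badh ?_
          calc Nf c (Xk βl ζ ε m) * ‖Xk βl ζ ε m'‖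
              ≤ (Nf c (Xk βl ζ ε m') + |b| * (R/ε)) * ‖Xk βl ζ ε m'‖ :=
                mul_le_mul_of_nonneg_right hNYshift (norm_nonneg _)
            _ ≤ (Nf c (Xk βl ζ ε m') + |b| * (R/ε)) * (K * ‖Xk βl ζ ε m‖) := by
                refine mul_le_mul_of_nonneg_left hKY ?_
                have h2 : (0:ℝ) ≤ |b| * (R/ε) := mul_nonneg habs0 (div_nonneg hRpos.le hε.le)
                linarith only [h2, hnZ.le]
        have h10 : (K*‖Xk βl ζ ε m‖) * (4*R*Nf c (Xk βl ζ ε m'))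
            < (K*‖Xk βl ζ ε m‖) * (Nf c (Xk βl ζ ε m') + |b| * (R/ε)) := by
          calc (K*‖Xk βl ζ ε m‖) * (4*R*Nf c (Xk βl ζ ε m'))
              = 4*K*R*Nf c (Xk βl ζ ε m')*‖Xk βl ζ ε m‖ := by ring
            _ < _ := h9
            _ = _ := by ring
        exact lt_of_mul_lt_mul_left h10 (mul_pos hKpos hwY).le
      refine ⟨fun h0 => absurd h0 hbz, fun _ => ?_, ?_⟩
      · by_contra hcon
        push_neg at hcon
        have hFm' : Xk βl ζ ε m' 0 - c * Xk βl ζ ε m' 2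
            = (ε*(ζ 0 - c*ζ 2) + (m':ℝ)*b)/ε := by
          rw [hF]
          field_simp
        have hNZF : |b|/(2*ε) ≤ Nf c (Xk βl ζ ε m') := by
          refine le_trans ?_ (st5_abs_le_Nf c _)
          rw [hFm', abs_div, abs_of_pos hε, div_le_div_iff₀ (by positivity) hε]
          have h1 := mul_le_mul_of_nonneg_right hcon (by positivity : (0:ℝ) ≤ 2*ε)
          linarith only [h1]
        have hbR : |b| * (R/ε) ≤ 2*R*Nf c (Xk βl ζ ε m') := by
          have h11 : |b| ≤ 2*ε*Nf c (Xk βl ζ ε m') := by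
            have h12 := mul_le_mul_of_nonneg_left hNZF (by positivity : (0:ℝ) ≤ 2*ε)
            calc |b| = 2*ε*(|b|/(2*ε)) := by field_simp
              _ ≤ 2*ε*Nf c (Xk βl ζ ε m') := h12
          calc |b| * (R/ε) ≤ (2*ε*Nf c (Xk βl ζ ε m'))*(R/ε) :=
                mul_le_mul_of_nonneg_right h11 (div_nonneg hRpos.le hε.le)
            _ = 2*R*Nf c (Xk βl ζ ε m') := by field_simp
        linarith only [hA', hbR, hnZ, mul_le_mul_of_nonneg_right hR1 hnZ.le]
      · have hNZsmall : Nf c (Xk βl ζ ε m') ≤ |b| * (R/ε)/3 := by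
          linarith only [hA', mul_le_mul_of_nonneg_right hR1 hnZ.le]
        rw [show 2*K*(1+|b|)*c₂/c₁ * R / (ε * ζ 1) * ‖Δ (Xk βl ζ ε m')‖
            = (2*K*(1+|b|)*c₂/c₁ * R * ‖Δ (Xk βl ζ ε m')‖) / (ε * ζ 1) from by ring,
          le_div_iff₀ hεγ]
        refine le_of_mul_le_mul_right ?_ (mul_pos hwY hwZ)
        have hchainL : ‖Δ (Xk βl ζ ε m)‖ * (ε * ζ 1) * (‖Xk βl ζ ε m‖*‖Xk βl ζ ε m'‖)
            ≤ (4/3)*K*c₂*|b| * R*(ζ 1)*‖Xk βl ζ ε m‖ := by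
          calc ‖Δ (Xk βl ζ ε m)‖ * (ε * ζ 1) * (‖Xk βl ζ ε m‖*‖Xk βl ζ ε m'‖)
              = (‖Δ (Xk βl ζ ε m)‖ * ‖Xk βl ζ ε m‖) * (ε * ζ 1 * ‖Xk βl ζ ε m'‖) := by
                ring
            _ ≤ (c₂ * Nf c (Xk βl ζ ε m)) * (ε * ζ 1 * ‖Xk βl ζ ε m'‖) :=
                mul_le_mul_of_nonneg_right (tr_up m) hεγW
            _ ≤ (c₂ * (Nf c (Xk βl ζ ε m') + |b| * (R/ε))) * (ε * ζ 1 * ‖Xk βl ζ ε m'‖) := by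
                refine mul_le_mul_of_nonneg_right ?_ hεγW
                exact mul_le_mul_of_nonneg_left hNYshift hc₂pos.le
            _ ≤ (c₂ * ((4/3)*(|b| * (R/ε)))) * (ε * ζ 1 * ‖Xk βl ζ ε m'‖) := by
                refine mul_le_mul_of_nonneg_right ?_ hεγW
                refine mul_le_mul_of_nonneg_left ?_ hc₂pos.le
                linarith only [hNZsmall]
            _ ≤ (c₂ * ((4/3)*(|b| * (R/ε)))) * (ε * ζ 1 * (K * ‖Xk βl ζ ε m‖)) := by
                refine mul_le_mul_of_nonneg_left (mul_le_mul_of_nonneg_left hKY hεγ.le) ?_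
                exact mul_nonneg hc₂pos.le (by positivity)
            _ = (4/3)*K*c₂*|b| * R*(ζ 1)*‖Xk βl ζ ε m‖ := by
                field_simp
        have hchainR : 2*K*(1+|b|)*c₂*R*(ζ 1)*‖Xk βl ζ ε m‖
            ≤ 2*K*(1+|b|)*c₂/c₁ * R * ‖Δ (Xk βl ζ ε m')‖
              * (‖Xk βl ζ ε m‖*‖Xk βl ζ ε m'‖) := by
          calc 2*K*(1+|b|)*c₂*R*(ζ 1)*‖Xk βl ζ ε m‖
              = (2*K*(1+|b|)*c₂/c₁*R) * ((c₁ * ζ 1) * ‖Xk βl ζ ε m‖) := by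
                field_simp
            _ ≤ (2*K*(1+|b|)*c₂/c₁*R) * ((c₁ * Nf c (Xk βl ζ ε m')) * ‖Xk βl ζ ε m‖) := by
                refine mul_le_mul_of_nonneg_left
                  (mul_le_mul_of_nonneg_right
                    (mul_le_mul_of_nonneg_left (hγN m') hc₁pos.le) (norm_nonneg _)) hq0
            _ ≤ (2*K*(1+|b|)*c₂/c₁*R) * ((‖Δ (Xk βl ζ ε m')‖ * ‖Xk βl ζ ε m'‖)
                  * ‖Xk βl ζ ε m‖) := by
                refine mul_le_mul_of_nonneg_left
                  (mul_le_mul_of_nonneg_right (tr_low m') (norm_nonneg _)) hq0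
            _ = _ := by ring
        refine le_trans hchainL (le_trans ?_ hchainR)
        have h43 : (4:ℝ)/3*|b| ≤ 2*(1+|b|) := by linarith only [habs0]
        have hnn : (0:ℝ) ≤ K*c₂*R*(ζ 1)*‖Xk βl ζ ε m‖ :=
          mul_nonneg (mul_nonneg (mul_nonneg (mul_nonneg hKpos.le hc₂pos.le) hRpos.le) hγ0)
            (norm_nonneg _)
        calc (4/3)*K*c₂*|b| * R*(ζ 1)*‖Xk βl ζ ε m‖
            = (K*c₂*R*(ζ 1)*‖Xk βl ζ ε m‖) * ((4:ℝ)/3*|b|) := by ring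
          _ ≤ (K*c₂*R*(ζ 1)*‖Xk βl ζ ε m‖) * (2*(1+|b|)) := mul_le_mul_of_nonneg_left h43 hnn
          _ = 2*K*(1+|b|)*c₂*R*(ζ 1)*‖Xk βl ζ ε m‖ := by ring
  constructor
  · intro j hj j' hj'
    obtain ⟨hc1, hb1⟩ := hj
    obtain ⟨hc2, hb2⟩ := hj'
    have m1 := main j hc1 hb1
    have m2 := main j' hc2 hb2
    by_cases hbz : b = 0
    · have u1 := m1.1 hbz
      have u2 := m2.1 hbz
      have hd : ‖Xk βl ζ ε (k (j-1)) - Xk βl ζ ε (k (j'-1))‖ < 2/(3*ε) := by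
        calc ‖Xk βl ζ ε (k (j-1)) - Xk βl ζ ε (k (j'-1))‖
            ≤ ‖Xk βl ζ ε (k (j-1))‖ + ‖Xk βl ζ ε (k (j'-1))‖ := norm_sub_le _ _
          _ < 2/(3*ε) := by
              rw [show (2:ℝ)/(3*ε) = 1/(3*ε) + 1/(3*ε) from by ring]
              exact add_lt_add u1 u2
      rw [hXdist] at hd
      have h2 := mul_lt_mul_of_pos_right hd hε
      rw [div_mul_cancel₀ _ hεne, show (2:ℝ)/(3*ε)*ε = 2/3 from by field_simp] at h2
      have h3 : ((|k (j - 1) - k (j' - 1)| : ℤ) : ℝ) < 1 := lt_trans h2 (by norm_num)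
      have h4 : |k (j - 1) - k (j' - 1)| < 1 := by exact_mod_cast h3
      have h4' := abs_lt.mp h4
      have h5 : k (j - 1) = k (j' - 1) := by omega
      have h6 := hkinj h5
      omega
    · have u1 := m1.2.1 hbz
      have u2 := m2.2.1 hbz
      have hbabs : 0 < |b| := abs_pos.mpr hbz
      have hsum : |((k j : ℝ)) * b - ((k j' : ℝ)) * b| < |b| := by
        calc |((k j : ℝ)) * b - ((k j' : ℝ)) * b|
            = |(ε*(ζ 0 - c*ζ 2) + (k j : ℝ)*b) + -(ε*(ζ 0 - c*ζ 2) + (k j' : ℝ)*b)| := by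
              congr 1
              ring
          _ ≤ |ε*(ζ 0 - c*ζ 2) + (k j : ℝ)*b| + |-(ε*(ζ 0 - c*ζ 2) + (k j' : ℝ)*b)| :=
              abs_add_le _ _
          _ = |ε*(ζ 0 - c*ζ 2) + (k j : ℝ)*b| + |ε*(ζ 0 - c*ζ 2) + (k j' : ℝ)*b| := by
              rw [abs_neg]
          _ < |b|/2 + |b|/2 := add_lt_add u1 u2
          _ = |b| := by ring
      have h3 : |((k j : ℝ)) - ((k j' : ℝ))| * |b| < 1 * |b| := by
        rw [← abs_mul, one_mul, sub_mul]
        exact hsum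
      have h4 : |((k j : ℝ)) - ((k j' : ℝ))| < 1 := lt_of_mul_lt_mul_right h3 hbabs.le
      have h5 : ((|k j - k j'| : ℤ) : ℝ) < 1 := by
        rw [Int.cast_abs]
        push_cast
        exact h4
      have h6 : |k j - k j'| < 1 := by exact_mod_cast h5
      have h6' := abs_lt.mp h6
      have h7 : k j = k j' := by omega
      exact hkinj h7
  · intro j hj
    exact (main j hj.1 hj.2).2.2

end
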